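/- For every y ∈ [0, 2π], ∫₀^{2π} log(10 − 8cos x − 2cos y) dx = 2π·log(5 − cos y + √(cos²y − 10cos y + 9)). -/

import Mathlib

open Real MeasureTheory Filter Topology


lemma pos_aux {r : ℝ} (hr0 : 0 ≤ r) (hr1 : r < 1) (x : ℝ) :
    0 < 1 - 2*r*Real.cos x + r^2 := by
  nlinarith [Real.neg_one_le_cos x, Real.cos_le_one x, sq_nonneg (1 - r)]

lemma keyZero {r : ℝ} (hr0 : 0 ≤ r) (hr1 : r < 1) :
    ∫ x in (0:ℝ)..(2*π), Real.log (1 - 2*r*Real.cos x + r^2) = 0 := by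
  have hsum : ∀ x : ℝ, HasSum (fun n : ℕ => -2 * (r^n * Real.cos (n*x) / n))
      (Real.log (1 - 2*r*Real.cos x + r^2)) := by
    intro x
    set z : ℂ := (r : ℂ) * Complex.exp (x * Complex.I) with hz
    have hnz : ‖z‖ < 1 := by
      rw [hz, norm_mul, Complex.norm_real, Real.norm_eq_abs,
        Complex.norm_exp_ofReal_mul_I, mul_one, abs_of_nonneg hr0]
      exact hr1
    have H := Complex.hasSum_re (Complex.hasSum_taylorSeries_neg_log hnz)
    have hterm : ∀ n : ℕ, (z^n / (n:ℂ)).re = r^n * Real.cos (n*x) / n := by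
      intro n
      have hzn : z^n = ((r^n : ℝ) : ℂ) * Complex.exp (((n*x : ℝ)) * Complex.I) := by
        rw [hz, mul_pow, ← Complex.exp_nat_mul]
        push_cast
        ring_nf
      rw [hzn]
      rw [show ((n:ℂ)) = ((n:ℝ):ℂ) by push_cast; ring]
      rw [Complex.div_ofReal_re, Complex.re_ofReal_mul, Complex.exp_ofReal_mul_I_re]
    have habs2 : ‖1 - z‖ ^ 2 = 1 - 2*r*Real.cos x + r^2 := by
      rw [Complex.sq_norm, Complex.normSq_apply, hz]
      simp [Complex.exp_ofReal_mul_I_re, Complex.exp_ofReal_mul_I_im, Complex.sub_re,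
        Complex.sub_im, Complex.mul_re, Complex.mul_im, Real.sin_sq_eq_half_sub]
      ring_nf
      nlinarith [Real.sin_sq_add_cos_sq x]
    have hval : (-Complex.log (1 - z)).re = -(Real.log ‖1 - z‖) := by
      rw [Complex.neg_re, Complex.log_re]
    rw [hval] at H
    simp only [hterm] at H
    have H2 := H.mul_left (-2)
    have : (-2 : ℝ) * -(Real.log ‖1 - z‖) = Real.log (1 - 2*r*Real.cos x + r^2) := by
      rw [← habs2, Real.log_pow]
      push_cast
      ring
    rwa [this] at H2
  have Hint : HasSum (fun n : ℕ => ∫ x in (0:ℝ)..(2*π), -2 * (r^n * Real.cos (n*x) / n))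
      (∫ x in (0:ℝ)..(2*π), Real.log (1 - 2*r*Real.cos x + r^2)) := by
    apply intervalIntegral.hasSum_integral_of_dominated_convergence
      (bound := fun (n : ℕ) (_ : ℝ) => 2 * r^n)
    · intro n
      exact (Continuous.aestronglyMeasurable (by fun_prop)).restrict
    · intro n
      filter_upwards with t _
      rcases Nat.eq_zero_or_pos n with rfl | hn
      · simp
      · have h1 : |Real.cos (n*t)| ≤ 1 := Real.abs_cos_le_one _
        have h2 : (1:ℝ) ≤ (n:ℝ) := by exact_mod_cast hn
        have h3 : (0:ℝ) < (n:ℝ) := by linarith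
        rw [norm_mul, norm_neg, Real.norm_two, norm_div, Real.norm_natCast, norm_mul,
          norm_pow, Real.norm_eq_abs, Real.norm_eq_abs, abs_of_nonneg hr0]
        rw [mul_div_assoc]
        have := pow_nonneg hr0 n
        calc 2 * (r^n * (|Real.cos (n*t)| / n)) ≤ 2 * (r^n * 1) := by
              gcongr
              rw [div_le_one h3]; linarith
          _ = 2 * r^n := by ring
    · filter_upwards with t _
      exact ((summable_geometric_of_lt_one hr0 hr1).mul_left 2)
    · exact intervalIntegrable_const
    · filter_upwards with t _
      exact hsum t
  have hzero : ∀ n : ℕ, (∫ x in (0:ℝ)..(2*π), -2 * (r^n * Real.cos (n*x) / n)) = 0 := by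
    intro n
    rcases Nat.eq_zero_or_pos n with rfl | hn
    · simp
    · have hne : (n:ℝ) ≠ 0 := by positivity
      have hfun : (fun x : ℝ => -2 * (r^n * Real.cos (n*x) / n))
          = fun x : ℝ => (-2 * r^n / n) * Real.cos ((n:ℝ)*x) := by
        funext x; ring
      rw [hfun, intervalIntegral.integral_const_mul,
        intervalIntegral.integral_comp_mul_left Real.cos hne, mul_zero, integral_cos,
        Real.sin_zero, show (n:ℝ)*(2*π) = (2*n)*π by ring]
      rw [show ((2*n : ℝ)) = ((2*n : ℕ) : ℝ) by push_cast; ring, Real.sin_nat_mul_pi]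
      simp
  have h0 : (fun n : ℕ => ∫ x in (0:ℝ)..(2*π), -2 * (r^n * Real.cos (n*x) / n))
      = fun _ => (0:ℝ) := funext hzero
  rw [h0] at Hint
  exact Hint.unique hasSum_zero

lemma integral_log_c (c : ℝ) (hc : c < 1) :
    (∫ x in (0:ℝ)..(2*π), Real.log (10 - 8*Real.cos x - 2*c))
      = 2*π*Real.log (5 - c + Real.sqrt (c^2 - 10*c + 9)) := by
  have hq : 0 < c^2 - 10*c + 9 := by nlinarith
  set s := Real.sqrt (c^2 - 10*c + 9) with hs
  have hs2 : s^2 = c^2 - 10*c + 9 := Real.sq_sqrt hq.le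
  have hspos : 0 < s := Real.sqrt_pos.mpr hq
  set C := 5 - c + s with hC
  have hC4 : 4 < C := by simp only [hC]; nlinarith
  have hCpos : 0 < C := by linarith
  set r := 4 / C with hr
  have hr0 : 0 ≤ r := by positivity
  have hr1 : r < 1 := by rw [hr, div_lt_one hCpos]; linarith
  have hkey : C * C - (10 - 2*c) * C + 16 = 0 := by
    simp only [hC]
    nlinarith [hs2]
  have hid : ∀ x : ℝ, 10 - 8*Real.cos x - 2*c = C * (1 - 2*r*Real.cos x + r^2) := by
    intro x
    rw [hr]
    field_simp
    nlinarith [hkey]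
  have h1 : ∀ x : ℝ, Real.log (10 - 8*Real.cos x - 2*c)
      = Real.log C + Real.log (1 - 2*r*Real.cos x + r^2) := by
    intro x
    rw [hid x, Real.log_mul hCpos.ne' (pos_aux hr0 hr1 x).ne']
  calc (∫ x in (0:ℝ)..(2*π), Real.log (10 - 8*Real.cos x - 2*c))
      = ∫ x in (0:ℝ)..(2*π), (Real.log C + Real.log (1 - 2*r*Real.cos x + r^2)) := by
        apply intervalIntegral.integral_congr
        intro x _
        exact h1 x
    _ = (∫ _x in (0:ℝ)..(2*π), Real.log C)
        + ∫ x in (0:ℝ)..(2*π), Real.log (1 - 2*r*Real.cos x + r^2) := by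
        apply intervalIntegral.integral_add intervalIntegrable_const
        apply ContinuousOn.intervalIntegrable
        apply ContinuousOn.log
        · fun_prop
        · intro x _
          exact (pos_aux hr0 hr1 x).ne'
    _ = 2*π*Real.log C := by
        rw [keyZero hr0 hr1, intervalIntegral.integral_const]
        simp [smul_eq_mul]


lemma degenerate :
    (∫ x in (0:ℝ)..(2*π), Real.log (8 - 8*Real.cos x)) = 2*π*Real.log 4 := by
  have hpi : (0:ℝ) < 2*π := by positivity
  set μ := volume.restrict (Set.Ioc (0:ℝ) (2*π)) with hμ
  set c : ℕ → ℝ := fun n => 1 - 1/(n+1) with hcdef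
  set f : ℕ → ℝ → ℝ := fun n x => Real.log (10 - 8*Real.cos x - 2*(c n)) with hfdef
  set F : ℝ → ℝ := fun x => Real.log (8 - 8*Real.cos x) with hFdef
  have hc0 : ∀ n, 0 ≤ c n := by
    intro n
    have h1 : (1:ℝ)/(n+1) ≤ 1 := by
      rw [div_le_one (by positivity)]; simp
    simp only [hcdef]; linarith
  have hclt : ∀ n, c n < 1 := by
    intro n
    have : (0:ℝ) < 1/(n+1) := by positivity
    simp only [hcdef]; linarith
  have hcmono : Monotone c := by
    intro m n hmn
    simp only [hcdef]
    have : (1:ℝ)/(n+1) ≤ 1/(m+1) := by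
      apply one_div_le_one_div_of_le (by positivity)
      have : (m:ℝ) ≤ n := by exact_mod_cast hmn
      linarith
    linarith
  have hctend : Tendsto c atTop (𝓝 1) := by
    have h1 := tendsto_one_div_add_atTop_nhds_zero_nat (𝕜 := ℝ)
    have h2 := tendsto_const_nhds (x := (1:ℝ)) (f := atTop (α := ℕ)) |>.sub h1
    rw [sub_zero] at h2
    rw [hcdef]
    convert h2 using 2
  have hargpos : ∀ n x, 0 < 10 - 8*Real.cos x - 2*(c n) := by
    intro n x
    have := Real.cos_le_one x
    have := hclt n
    nlinarith
  have hfcont : ∀ n, Continuous (f n) := by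
    intro n
    exact Continuous.log (by fun_prop) (fun x => (hargpos n x).ne')
  have hfint : ∀ n, Integrable (f n) μ := fun n => (hfcont n).integrableOn_Ioc
  have hIn : ∀ n, ∫ x, f n x ∂μ = 2*π*Real.log (5 - c n + Real.sqrt ((c n)^2 - 10*(c n) + 9)) := by
    intro n
    rw [hμ, ← intervalIntegral.integral_of_le hpi.le]
    exact integral_log_c (c n) (hclt n)
  have haecos : ∀ᵐ x ∂μ, Real.cos x ≠ 1 := by
    rw [hμ]
    apply ae_restrict_of_ae
    have hcount : Set.Countable {x : ℝ | Real.cos x = 1} := by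
      have hsub : {x : ℝ | Real.cos x = 1} ⊆ Set.range (fun n : ℤ => (n : ℝ) * (2*π)) := by
        intro x hx
        obtain ⟨n, hn⟩ := (Real.cos_eq_one_iff x).mp hx
        exact ⟨n, hn⟩
      exact (Set.countable_range _).mono hsub
    have h0 : volume {x : ℝ | Real.cos x = 1} = 0 := hcount.measure_zero _
    rw [ae_iff]
    simpa using h0
  have haetend : ∀ᵐ x ∂μ, Tendsto (fun n => f n x) atTop (𝓝 (F x)) := by
    filter_upwards [haecos] with x hx
    have hcos : Real.cos x < 1 := lt_of_le_of_ne (Real.cos_le_one x) hx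
    have hpos : 0 < 8 - 8*Real.cos x := by linarith
    have h1 : Tendsto (fun n => 10 - 8*Real.cos x - 2*(c n)) atTop (𝓝 (10 - 8*Real.cos x - 2*1)) :=
      tendsto_const_nhds.sub (hctend.const_mul 2)
    have h2 : (10 - 8*Real.cos x - 2*1) = 8 - 8*Real.cos x := by ring
    rw [h2] at h1
    exact ((Real.continuousAt_log hpos.ne').tendsto.comp h1)
  have haemono : ∀ᵐ x ∂μ, Antitone (fun n => f n x) := by
    filter_upwards with x m n hmn
    simp only [hfdef]
    apply Real.log_le_log (hargpos n x)
    have := hcmono hmn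
    linarith
  have hgnn : ∀ n x, 0 ≤ f 0 x - f n x := by
    intro n x
    have := Real.log_le_log (hargpos n x) (by have := hcmono (Nat.zero_le n); linarith :
      10 - 8*Real.cos x - 2*(c n) ≤ 10 - 8*Real.cos x - 2*(c 0))
    simp only [hfdef]; linarith
  have hC4 : ∀ n, (4:ℝ) ≤ 5 - c n + Real.sqrt ((c n)^2 - 10*(c n) + 9) := by
    intro n
    have h1 := Real.sqrt_nonneg ((c n)^2 - 10*(c n) + 9)
    have := hclt n
    linarith
  set B : ℝ := (∫ x, f 0 x ∂μ) - 2*π*Real.log 4 with hBdef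
  have hInB : ∀ n, (∫ x, (f 0 x - f n x) ∂μ) ≤ B := by
    intro n
    rw [integral_sub (hfint 0) (hfint n), hBdef]
    have h4 : 2*π*Real.log 4 ≤ ∫ x, f n x ∂μ := by
      rw [hIn n]
      have := Real.log_le_log (by norm_num : (0:ℝ) < 4) (hC4 n)
      nlinarith [Real.pi_pos]
    linarith
  set g : ℝ → ℝ := fun x => f 0 x - F x with hgdef
  have hgnn' : ∀ x, 0 ≤ g x := by
    intro x
    rcases lt_or_eq_of_le (Real.cos_le_one x) with h | h
    · have h8 : (0:ℝ) < 8 - 8*Real.cos x := by linarith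
      have hle : 8 - 8*Real.cos x ≤ 10 - 8*Real.cos x - 2*(c 0) := by
        have := hc0 0; have := hclt 0; linarith
      have := Real.log_le_log h8 hle
      simp only [hgdef, hfdef, hFdef]; linarith
    · have hF0 : F x = 0 := by
        have h8 : 8 - 8*Real.cos x = 0 := by rw [h]; ring
        show Real.log (8 - 8*Real.cos x) = 0
        rw [h8, Real.log_zero]
      have hf00 : 0 ≤ f 0 x := by
        apply Real.log_nonneg
        have hc00 : c 0 = 0 := by simp [hcdef]
        have := Real.cos_le_one x
        rw [hc00]; nlinarith
      simp only [hgdef]; linarith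
  have hFmeas : Measurable F :=
    Real.measurable_log.comp (by fun_prop)
  have hgmeas : Measurable g := ((hfcont 0).measurable).sub hFmeas
  have hliminf : (∫⁻ x, ENNReal.ofReal (g x) ∂μ) ≤ ENNReal.ofReal B := by
    have hgm : ∀ n, Measurable (fun x => ENNReal.ofReal (f 0 x - f n x)) := by
      intro n
      exact (((hfcont 0).measurable).sub ((hfcont n).measurable)).ennreal_ofReal
    have hfatou := lintegral_liminf_le hgm (μ := μ) (u := atTop)
    have hcongr : (∫⁻ x, ENNReal.ofReal (g x) ∂μ)
        = ∫⁻ x, Filter.liminf (fun n => ENNReal.ofReal (f 0 x - f n x)) atTop ∂μ := by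
      apply lintegral_congr_ae
      filter_upwards [haetend] with x hx
      have ht : Tendsto (fun n => ENNReal.ofReal (f 0 x - f n x)) atTop
          (𝓝 (ENNReal.ofReal (g x))) :=
        (ENNReal.continuous_ofReal.tendsto _).comp (tendsto_const_nhds.sub hx)
      exact ht.liminf_eq.symm
    rw [hcongr]
    refine le_trans hfatou ?_
    have hb : ∀ n, (∫⁻ x, ENNReal.ofReal (f 0 x - f n x) ∂μ) ≤ ENNReal.ofReal B := by
      intro n
      have heq := ofReal_integral_eq_lintegral_ofReal (f := fun x => f 0 x - f n x)
        ((hfint 0).sub (hfint n)) (Filter.Eventually.of_forall (hgnn n))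
      rw [← heq]
      exact ENNReal.ofReal_le_ofReal (hInB n)
    calc Filter.liminf (fun n => ∫⁻ x, ENNReal.ofReal (f 0 x - f n x) ∂μ) atTop
        ≤ Filter.liminf (fun _ : ℕ => ENNReal.ofReal B) atTop :=
          Filter.liminf_le_liminf (Filter.Eventually.of_forall hb)
      _ = ENNReal.ofReal B := Filter.liminf_const _
  have hgint : Integrable g μ := by
    refine ⟨hgmeas.aestronglyMeasurable, ?_⟩
    rw [hasFiniteIntegral_iff_ofReal (Filter.Eventually.of_forall hgnn')]
    exact lt_of_le_of_lt hliminf ENNReal.ofReal_lt_top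
  have hFint : Integrable F μ := by
    have hFeq : F = fun x => f 0 x - g x := by
      funext x; simp only [hgdef]; ring
    rw [hFeq]
    exact (hfint 0).sub hgint
  have hlim := integral_tendsto_of_tendsto_of_antitone hfint hFint haemono haetend
  have hlim2 : Tendsto (fun n => ∫ x, f n x ∂μ) atTop (𝓝 (2*π*Real.log 4)) := by
    simp only [hIn]
    have hcont : Continuous (fun t : ℝ => 5 - t + Real.sqrt (t^2 - 10*t + 9)) := by
      apply Continuous.add (by fun_prop)
      exact Real.continuous_sqrt.comp (by fun_prop)
    have h1 : Tendsto (fun n => 5 - c n + Real.sqrt ((c n)^2 - 10*(c n) + 9)) atTop (𝓝 4) := by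
      have h := (hcont.tendsto 1).comp hctend
      have : (5 - (1:ℝ) + Real.sqrt (1^2 - 10*1 + 9)) = 4 := by
        norm_num
      rw [this] at h
      exact h
    have h2 := ((Real.continuousAt_log (by norm_num : (4:ℝ) ≠ 0)).tendsto.comp h1).const_mul (2*π)
    exact h2
  have hFeqI : ∫ x, F x ∂μ = 2*π*Real.log 4 := tendsto_nhds_unique hlim hlim2
  rw [intervalIntegral.integral_of_le hpi.le]
  exact hFeqI


theorem integral_log_F (y : ℝ) (hy : y ∈ Set.Icc (0:ℝ) (2 * π)) :
    (∫ x in (0:ℝ)..(2 * π), Real.log (10 - 8 * Real.cos x - 2 * Real.cos y)) =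
      2 * π * Real.log (5 - Real.cos y +
        Real.sqrt (Real.cos y ^ 2 - 10 * Real.cos y + 9)) := by
  rcases lt_or_eq_of_le (Real.cos_le_one y) with h | h
  · exact integral_log_c (Real.cos y) h
  · rw [h]
    have h1 : (∫ x in (0:ℝ)..(2*π), Real.log (10 - 8 * Real.cos x - 2 * 1))
        = ∫ x in (0:ℝ)..(2*π), Real.log (8 - 8*Real.cos x) := by
      apply intervalIntegral.integral_congr
      intro x _
      norm_num
      ring_nf
    rw [h1, degenerate]
    norm_num
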